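/- For every integer k ≥ 1, every integer m ≥ 0 and every real number x, E_{m,1/q}^{(k,k)}(k−x) = (−1)^m q^{m + k(k−1)/2} E_{m,q}^{(k,k)}(x), where E_{m,1/q}^{(k,k)} denotes the same polynomial with q replaced by 1/q. -/

import Mathlib

open Finset

/-- The q-number `[x]_q = (1 - q^x)/(1 - q)`, with `q^x = exp (x * log q)` (rpow). -/
noncomputable def qNum (q x : ℝ) : ℝ := (1 - q ^ x) / (1 - q)

/-- `[l]_{-q} = (1 - (-q)^l)/(1 + q)` for a natural number `l`. -/
noncomputable def qNumNeg (q : ℝ) (l : ℕ) : ℝ := (1 - (-q) ^ l) / (1 + q)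

/-- The higher-order q-Euler polynomial
`E_{m,q}^{(h,k)}(x) = ((1+q)^k/(1-q)^m) * Σ_{j=0}^m C(m,j) (-1)^j q^{jx} / Π_{i=0}^{k-1} (1 + q^{h+j-i})`. -/
noncomputable def qE (q : ℝ) (h : ℤ) (k m : ℕ) (x : ℝ) : ℝ :=
  ((1 + q) ^ k / (1 - q) ^ m) *
    ∑ j ∈ Finset.range (m + 1),
      (m.choose j : ℝ) * (-1) ^ j * q ^ ((j : ℝ) * x) /
        ∏ i ∈ Finset.range k, (1 + q ^ ((h : ℝ) + (j : ℝ) - (i : ℝ)))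

lemma rpow_sum' {q : ℝ} (hq : 0 < q) {ι : Type*} (s : Finset ι) (f : ι → ℝ) :
    q ^ (∑ i ∈ s, f i) = ∏ i ∈ s, q ^ (f i) := by
  rw [Real.rpow_def_of_pos hq, Finset.mul_sum, Real.exp_sum]
  exact Finset.prod_congr rfl fun i _ => (Real.rpow_def_of_pos hq _).symm

lemma cast_exp (k m : ℕ) (hk : 1 ≤ k) :
    ((m + k * (k - 1) / 2 : ℕ) : ℝ) = m + (k : ℝ) * ((k : ℝ) - 1) / 2 := by
  have h2 : 2 ∣ k * (k - 1) := by
    have := (Nat.even_mul_succ_self (k-1)).two_dvd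
    rwa [Nat.sub_add_cancel hk, mul_comm] at this
  rw [Nat.cast_add, Nat.cast_div h2 (by norm_num), Nat.cast_mul, Nat.cast_sub hk]
  norm_num

lemma gauss (k : ℕ) : (∑ i ∈ range k, (i:ℝ)) = (k:ℝ) * ((k:ℝ) - 1) / 2 := by
  induction k with
  | zero => simp
  | succ n ih => rw [Finset.sum_range_succ, ih]; push_cast; ring

theorem stmt_12 (q : ℝ) (hq : 0 < q) (hq1 : q ≠ 1) (k : ℕ) (hk : 1 ≤ k) (m : ℕ) (x : ℝ) :
    qE (1 / q) k k m ((k : ℝ) - x) = (-1) ^ m * q ^ (m + k * (k - 1) / 2) * qE q k k m x := by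
  have hq0 : q ≠ 0 := ne_of_gt hq
  have h1q : (1:ℝ) - q ≠ 0 := sub_ne_zero.mpr (fun h => hq1 h.symm)
  simp only [qE, Int.cast_natCast, Finset.mul_sum]
  refine Finset.sum_congr rfl fun j hj => ?_
  set S : ℝ := (k:ℝ)*k + k*j - k*((k:ℝ)-1)/2 with hSdef
  have hS : ∑ i ∈ range k, ((k:ℝ)+(j:ℝ)-(i:ℝ)) = S := by
    simp only [Finset.sum_sub_distrib, Finset.sum_add_distrib, Finset.sum_const,
      Finset.card_range, nsmul_eq_mul, gauss]
    exact hSdef.symm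
  have hD' : ∏ i ∈ range k, (1 + (1/q)^((k:ℝ)+(j:ℝ)-(i:ℝ)))
      = (q ^ S)⁻¹ * ∏ i ∈ range k, (1 + q^((k:ℝ)+(j:ℝ)-(i:ℝ))) := by
    rw [← Real.rpow_neg hq.le, ← hS, ← Finset.sum_neg_distrib, rpow_sum' hq,
      ← Finset.prod_mul_distrib]
    refine Finset.prod_congr rfl fun i _ => ?_
    rw [one_div, Real.inv_rpow hq.le, ← Real.rpow_neg hq.le, mul_add, mul_one,
      ← Real.rpow_add hq, neg_add_cancel, Real.rpow_zero, add_comm]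
  have h1 : (1 + 1/q)^k = (1+q)^k / q^k := by
    rw [show (1:ℝ) + 1/q = (1+q)/q by field_simp; ring, div_pow]
  have h2 : (1 - 1/q)^m = (-1)^m * (1-q)^m / q^m := by
    rw [show (1:ℝ) - 1/q = (-(1-q))/q by field_simp; ring, div_pow, neg_pow]
  have hnum : (1/q : ℝ) ^ ((j:ℝ)*((k:ℝ)-x)) = q ^ (-((j:ℝ)*((k:ℝ)-x))) := by
    rw [one_div, Real.inv_rpow hq.le, ← Real.rpow_neg hq.le]
  have hDpos : (0:ℝ) < ∏ i ∈ range k, (1 + q^((k:ℝ)+(j:ℝ)-(i:ℝ))) :=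
    Finset.prod_pos fun i _ => by positivity
  have hkey : q ^ m * q ^ (-((j:ℝ)*((k:ℝ)-x))) * q ^ S
      = q ^ k * q ^ (m + k * (k - 1) / 2) * q ^ ((j:ℝ)*x) := by
    rw [← Real.rpow_natCast q m, ← Real.rpow_natCast q k,
      ← Real.rpow_natCast q (m + k * (k - 1) / 2),
      ← Real.rpow_add hq, ← Real.rpow_add hq, ← Real.rpow_add hq, ← Real.rpow_add hq]
    congr 1
    rw [cast_exp k m hk, hSdef]
    ring
  rw [hD', h1, h2, hnum]
  have hsS : q ^ S ≠ 0 := (Real.rpow_pos_of_pos hq S).ne'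
  field_simp
  have hsq : ((-1:ℝ))^m * (-1)^m = 1 := by
    rw [← pow_add]; exact Even.neg_one_pow ⟨m, rfl⟩
  set c : ℝ := (1+q)^k * (m.choose j : ℝ) * (-1)^j * (1-q)^m *
    ∏ i ∈ range k, (1 + q ^ ((k:ℝ) + (j:ℝ) - (i:ℝ))) with hc
  linear_combination (m.choose j : ℝ) * hkey - ((m.choose j : ℝ) * q^k * q^(m + k*(k-1)/2) * q^((j:ℝ)*x)) * hsq
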